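/- The map Ψ_n : W_n → S_{2n} defined by Ψ_n(σ) = ψ ∘ σ ∘ ψ⁻¹, where ψ : [±n] → [2n] is the order-preserving bijection, is an injective group homomorphism, and for all σ ∈ W_n the Coxeter length satisfies ℓ(Ψ_n(σ)) = 2ℓ(σ) − ℓ_0(σ), where ℓ_0(σ) = |{i ∈ [n] : σ(i) < 0}|. -/

import Mathlib

/-- The hyperoctahedral group `W_n`: bijections `w` of `ℤ` with `w (-i) = -(w i)` for
all `i`, fixing every `i` with `|i| > n`.  This is the group of signed permutations of
`[±n] = {-n, …, -1, 1, …, n}`. -/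
def WB (n : ℕ) : Subgroup (Equiv.Perm ℤ) where
  carrier := {w | (∀ i : ℤ, w (-i) = -(w i)) ∧ ∀ i : ℤ, (n : ℤ) < |i| → w i = i}
  one_mem' := by
    constructor <;> intro i <;> simp
  mul_mem' := by
    rintro u v ⟨hu1, hu2⟩ ⟨hv1, hv2⟩
    constructor
    · intro i
      simp only [Equiv.Perm.mul_apply, hv1, hu1]
    · intro i hi
      simp only [Equiv.Perm.mul_apply, hv2 i hi, hu2 i hi]
  inv_mem' := by
    rintro w ⟨h1, h2⟩
    constructor
    · intro i
      apply w.injective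
      rw [Equiv.Perm.coe_inv, Equiv.apply_symm_apply, h1, Equiv.apply_symm_apply]
    · intro i hi
      apply w.injective
      rw [Equiv.Perm.coe_inv, Equiv.apply_symm_apply, h2 i hi]

/-- The standard Coxeter generators of `W_n`: `tB 0 = (-1, 1)` and
`tB i = (i, i+1)(-i, -i-1)` for `i ≥ 1`. -/
def tB : ℕ → Equiv.Perm ℤ
  | 0 => Equiv.swap (-1) 1
  | (k + 1) => Equiv.swap ((k : ℤ) + 1) ((k : ℤ) + 2) *
      Equiv.swap (-((k : ℤ) + 1)) (-((k : ℤ) + 2))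

/-- The Coxeter length of an element of `W_n`: the least length of a word in the
generators `tB 0, …, tB (n-1)` whose product is the given element. -/
noncomputable def lenB (n : ℕ) (w : WB n) : ℕ :=
  sInf {l | ∃ word : List (Fin n), word.length = l ∧
    (word.map (fun i => tB i)).prod = (w : Equiv.Perm ℤ)}

/-- The set of atoms of `z`: the minimal length elements `w` with `w⁻¹ ∘ w = z`. -/
def AtomsB (n : ℕ) (o : WB n → WB n → WB n) (z : WB n) : Set (WB n) :=
  {w | o w⁻¹ w = z ∧ ∀ v : WB n, o v⁻¹ v = z → lenB n w ≤ lenB n v}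

/-- The order-preserving bijection `ψ : [±n] → [2n]` (sending `{-n,…,-1}` to `{1,…,n}`
and `{1,…,n}` to `{n+1,…,2n}`), extended to a permutation of `ℤ` fixing `0` and
shifting the remaining integers by `n`. -/
def phiEquiv (n : ℕ) : Equiv.Perm ℤ where
  toFun i := if i = 0 then 0 else if -(n : ℤ) ≤ i ∧ i < 0 then i + n + 1 else i + n
  invFun j := if j = 0 then 0 else if 1 ≤ j ∧ j ≤ (n : ℤ) then j - n - 1 else j - n
  left_inv := by
    intro i
    dsimp only
    split_ifs <;> omega
  right_inv := by
    intro j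
    dsimp only
    split_ifs <;> omega

/-- The embedding `Ψ_n : W_n → S_{2n}`, `Ψ_n(σ) = ψ ∘ σ ∘ ψ⁻¹`. -/
def PsiB (n : ℕ) (σ : WB n) : Equiv.Perm ℤ :=
  phiEquiv n * (σ : Equiv.Perm ℤ) * (phiEquiv n)⁻¹

/-- The number of inversions of a permutation on `[2n] = {1,…,2n}`; this is the
Coxeter length in `S_{2n}`. -/
noncomputable def invS2n (n : ℕ) (w : Equiv.Perm ℤ) : ℕ :=
  {p : ℤ × ℤ | 1 ≤ p.1 ∧ p.1 < p.2 ∧ p.2 ≤ 2 * (n : ℤ) ∧ w p.2 < w p.1}.ncard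

/-- `ℓ_0(σ) = |{i ∈ [n] : σ(i) < 0}|`. -/
noncomputable def ell0 (n : ℕ) (σ : WB n) : ℕ :=
  {i : ℤ | 1 ≤ i ∧ i ≤ (n : ℤ) ∧ (σ : Equiv.Perm ℤ) i < 0}.ncard

namespace Stmt9
open Finset Equiv


lemma phi_apply (n : ℕ) (x : ℤ) :
    phiEquiv n x = if x = 0 then 0 else if -(n : ℤ) ≤ x ∧ x < 0 then x + n + 1 else x + n := rfl

lemma phi_inv_apply (n : ℕ) (j : ℤ) :
    (phiEquiv n)⁻¹ j = if j = 0 then 0 else if 1 ≤ j ∧ j ≤ (n : ℤ) then j - n - 1 else j - n := rfl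

lemma phi_lt_phi (n : ℕ) {a b : ℤ} (ha : a ≠ 0) (hb : b ≠ 0) :
    phiEquiv n a < phiEquiv n b ↔ a < b := by
  simp only [phi_apply]
  split_ifs <;> omega

lemma tB0_apply (x : ℤ) : tB 0 x = if x = -1 then 1 else if x = 1 then -1 else x := by
  simp [tB, Equiv.swap_apply_def]

lemma tBk_apply (k : ℕ) (x : ℤ) : tB (k+1) x =
    if x = (k:ℤ)+1 then (k:ℤ)+2 else if x = (k:ℤ)+2 then (k:ℤ)+1
    else if x = -((k:ℤ)+1) then -((k:ℤ)+2) else if x = -((k:ℤ)+2) then -((k:ℤ)+1) else x := by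
  simp only [tB, Equiv.Perm.mul_apply, Equiv.swap_apply_def]
  split_ifs <;> omega

lemma tB_mem (n : ℕ) (i : ℕ) (hi : i < n) : tB i ∈ WB n := by
  constructor
  · intro x
    cases i with
    | zero => simp only [tB0_apply]; split_ifs <;> omega
    | succ k => simp only [tBk_apply]; split_ifs <;> omega
  · intro x hx
    have hx' : x < -(n:ℤ) ∨ (n:ℤ) < x := by rcases abs_cases x with ⟨h1,h2⟩ <;> omega
    cases i with
    | zero =>
      have hn : 1 ≤ (n:ℤ) := by exact_mod_cast hi
      simp only [tB0_apply]; split_ifs <;> omega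
    | succ k =>
      simp only [tBk_apply]
      have : (k:ℤ) + 2 ≤ n := by exact_mod_cast hi
      split_ifs <;> omega

lemma tB_sq (i : ℕ) : tB i * tB i = 1 := by
  ext x
  cases i with
  | zero =>
    simp only [Equiv.Perm.mul_apply, tB0_apply, Equiv.Perm.one_apply]
    split_ifs <;> first | contradiction | omega
  | succ k =>
    simp only [Equiv.Perm.mul_apply, tBk_apply, Equiv.Perm.one_apply]
    split_ifs <;> first | contradiction | omega

section WBfacts
variable {n : ℕ} {w : Equiv.Perm ℤ} (hw : w ∈ WB n)

lemma wb_zero (hw : w ∈ WB n) : w 0 = 0 := by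
  have := hw.1 0
  simp only [neg_zero] at this
  omega

lemma wb_ne_zero (hw : w ∈ WB n) {x : ℤ} (hx : x ≠ 0) : w x ≠ 0 := by
  intro h
  exact hx (w.injective (h.trans (wb_zero hw).symm))

lemma wb_bound (hw : w ∈ WB n) {x : ℤ} (hx : |x| ≤ (n:ℤ)) : |w x| ≤ (n:ℤ) := by
  by_contra h
  push_neg at h
  have h2 := hw.2 (w x) h
  have h3 := w.injective h2
  rw [h3] at h
  omega

end WBfacts



noncomputable def invF (n : ℕ) (w : Equiv.Perm ℤ) : ℕ :=
  ∑ p ∈ Finset.Icc (1:ℤ) (2*n) ×ˢ Finset.Icc (1:ℤ) (2*n),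
    if p.1 < p.2 ∧ w p.2 < w p.1 then 1 else 0

noncomputable def ellF (n : ℕ) (w : Equiv.Perm ℤ) : ℕ :=
  ∑ j ∈ Finset.Icc (1:ℤ) (n:ℤ), if w j < 0 then 1 else 0

lemma invS2n_eq (n : ℕ) (w : Equiv.Perm ℤ) : invS2n n w = invF n w := by
  have hset : {p : ℤ × ℤ | 1 ≤ p.1 ∧ p.1 < p.2 ∧ p.2 ≤ 2 * (n : ℤ) ∧ w p.2 < w p.1}
      = ↑((Finset.Icc (1:ℤ) (2*n) ×ˢ Finset.Icc (1:ℤ) (2*n)).filter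
          (fun p => p.1 < p.2 ∧ w p.2 < w p.1)) := by
    ext ⟨a, b⟩
    simp only [Set.mem_setOf_eq, Finset.coe_filter, Finset.mem_product, Finset.mem_Icc,
      Set.mem_setOf_eq]
    constructor
    · rintro ⟨h1, h2, h3, h4⟩; exact ⟨⟨⟨h1, by omega⟩, ⟨by omega, by push_cast; omega⟩⟩, h2, h4⟩
    · rintro ⟨⟨⟨h1, h2⟩, h3, h4⟩, h5, h6⟩; exact ⟨h1, h5, by push_cast at h4 ⊢; omega, h6⟩
  rw [invS2n, hset, Set.ncard_coe_finset, invF, Finset.card_filter]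

lemma ell0_eq (n : ℕ) (σ : WB n) : ell0 n σ = ellF n (σ : Equiv.Perm ℤ) := by
  have hset : {i : ℤ | 1 ≤ i ∧ i ≤ (n : ℤ) ∧ (σ : Equiv.Perm ℤ) i < 0}
      = ↑((Finset.Icc (1:ℤ) (n:ℤ)).filter (fun i => (σ : Equiv.Perm ℤ) i < 0)) := by
    ext a
    simp only [Set.mem_setOf_eq, Finset.coe_filter, Finset.mem_Icc, Set.mem_setOf_eq]
    tauto
  rw [ell0, hset, Set.ncard_coe_finset, ellF, Finset.card_filter]

lemma swap_mem_Icc (n : ℕ) (a : ℤ) (h1 : 1 ≤ a) (h2 : a + 1 ≤ 2*(n:ℤ)) (x : ℤ) :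
    x ∈ Finset.Icc (1:ℤ) (2*n) ↔ Equiv.swap a (a+1) x ∈ Finset.Icc (1:ℤ) (2*n) := by
  simp only [Finset.mem_Icc, Equiv.swap_apply_def]
  split_ifs <;> omega

/-- Key lemma: right multiplication by an adjacent transposition changes the
inversion number by exactly one. -/
lemma invF_swap (n : ℕ) (w : Equiv.Perm ℤ) (a : ℤ) (h1 : 1 ≤ a) (h2 : a + 1 ≤ 2*(n:ℤ)) :
    invF n (w * Equiv.swap a (a+1)) + (if w (a+1) < w a then 1 else 0)
      = invF n w + (if w a < w (a+1) then 1 else 0) := by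
  set s := Equiv.swap a (a+1) with hs
  set S : Finset (ℤ × ℤ) := Finset.Icc (1:ℤ) (2*n) ×ˢ Finset.Icc (1:ℤ) (2*n) with hS
  have hstep1 : invF n (w * s) = ∑ p ∈ S, (if s p.1 < s p.2 ∧ w p.2 < w p.1 then 1 else 0) := by
    rw [invF]
    refine Finset.sum_equiv (Equiv.prodCongr s s) ?_ ?_
    · rintro ⟨x, y⟩
      simp only [hS, Finset.mem_product, Equiv.prodCongr_apply, Prod.map]
      rw [← swap_mem_Icc n a h1 h2 x, ← swap_mem_Icc n a h1 h2 y]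
    · rintro ⟨x, y⟩ _
      simp only [Equiv.prodCongr_apply, Prod.map, Equiv.Perm.mul_apply]
      have hx : s (s x) = x := by rw [hs]; simp [Equiv.swap_apply_self]
      have hy : s (s y) = y := by rw [hs]; simp [Equiv.swap_apply_self]
      simp only [hx, hy]
      exact if_congr Iff.rfl rfl rfl
  have hmem1 : ((a, a+1) : ℤ × ℤ) ∈ S := by
    simp only [hS, Finset.mem_product, Finset.mem_Icc]; omega
  have hmem2 : ((a+1, a) : ℤ × ℤ) ∈ S.erase (a, a+1) := by
    rw [Finset.mem_erase]
    constructor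
    · intro h; rw [Prod.mk.injEq] at h; omega
    · simp only [hS, Finset.mem_product, Finset.mem_Icc]; omega
  have hsa : s a = a + 1 := Equiv.swap_apply_left a (a+1)
  have hsa1 : s (a+1) = a := Equiv.swap_apply_right a (a+1)
  -- split both sums
  have split : ∀ f : ℤ × ℤ → ℕ, ∑ p ∈ S, f p
      = f (a, a+1) + (f (a+1, a) + ∑ p ∈ (S.erase (a, a+1)).erase (a+1, a), f p) := by
    intro f
    rw [Finset.add_sum_erase _ f hmem2, Finset.add_sum_erase _ f hmem1]
  have hagree : ∀ p ∈ (S.erase (a, a+1)).erase (a+1, a),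
      (if s p.1 < s p.2 ∧ w p.2 < w p.1 then (1:ℕ) else 0)
        = (if p.1 < p.2 ∧ w p.2 < w p.1 then 1 else 0) := by
    rintro ⟨x, y⟩ hp
    rw [Finset.mem_erase, Finset.mem_erase] at hp
    have hne1 : ¬(x = a + 1 ∧ y = a) := by
      intro ⟨u, v⟩; exact hp.1 (by rw [Prod.mk.injEq]; exact ⟨u, v⟩)
    have hne2 : ¬(x = a ∧ y = a + 1) := by
      intro ⟨u, v⟩; exact hp.2.1 (by rw [Prod.mk.injEq]; exact ⟨u, v⟩)
    have hiff : (s x < s y) ↔ (x < y) := by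
      simp only [hs, Equiv.swap_apply_def]
      split_ifs <;> omega
    dsimp only
    simp only [hiff]
  have hsumc : ∑ p ∈ (S.erase (a, a+1)).erase (a+1, a),
      (if s p.1 < s p.2 ∧ w p.2 < w p.1 then (1:ℕ) else 0)
      = ∑ p ∈ (S.erase (a, a+1)).erase (a+1, a),
      (if p.1 < p.2 ∧ w p.2 < w p.1 then (1:ℕ) else 0) := Finset.sum_congr rfl hagree
  have hinvw : invF n w = ∑ p ∈ S, (if p.1 < p.2 ∧ w p.2 < w p.1 then (1:ℕ) else 0) := by
    rw [invF, ← hS]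
  rw [hstep1, split, hinvw, split (fun p => if p.1 < p.2 ∧ w p.2 < w p.1 then 1 else 0), hsumc]
  dsimp only
  rw [hsa, hsa1]
  have hne : w a ≠ w (a+1) := fun h => by have := w.injective h; omega
  split_ifs <;> omega



noncomputable def Fp (n : ℕ) (w : Equiv.Perm ℤ) : ℕ :=
  invF n (phiEquiv n * w * (phiEquiv n)⁻¹) + ellF n w

lemma conj_mul (φ u v : Equiv.Perm ℤ) :
    φ * (u * v) * φ⁻¹ = (φ * u * φ⁻¹) * (φ * v * φ⁻¹) := by group

lemma phi_val_pos (n : ℕ) (x : ℤ) (hx : 1 ≤ x) : phiEquiv n x = x + n := by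
  rw [phi_apply]; split_ifs <;> omega

lemma phi_val_neg (n : ℕ) (x : ℤ) (hx1 : -(n:ℤ) ≤ x) (hx2 : x ≤ -1) :
    phiEquiv n x = x + n + 1 := by
  rw [phi_apply]; split_ifs <;> omega

lemma conj_t0 (n : ℕ) (hn : 0 < n) :
    phiEquiv n * tB 0 * (phiEquiv n)⁻¹ = Equiv.swap (n:ℤ) ((n:ℤ)+1) := by
  have h := Equiv.swap_apply_apply (phiEquiv n) (-1 : ℤ) 1
  rw [show tB 0 = Equiv.swap (-1 : ℤ) 1 from rfl, ← h,
    phi_val_neg n (-1) (by omega) (by omega), phi_val_pos n 1 (by omega)]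
  rw [show (-1:ℤ)+n+1 = (n:ℤ) by ring, show (1:ℤ)+n = (n:ℤ)+1 by ring]

lemma conj_tk (n k : ℕ) (hk : (k:ℤ) + 2 ≤ n) :
    phiEquiv n * tB (k+1) * (phiEquiv n)⁻¹
      = Equiv.swap ((n:ℤ)+k+1) ((n:ℤ)+k+1+1) * Equiv.swap ((n:ℤ)-k-2+1) ((n:ℤ)-k-2+1+1) := by
  rw [show tB (k+1) = Equiv.swap ((k:ℤ)+1) ((k:ℤ)+2) *
      Equiv.swap (-((k:ℤ)+1)) (-((k:ℤ)+2)) from rfl, conj_mul,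
    ← Equiv.swap_apply_apply (phiEquiv n) ((k:ℤ)+1) ((k:ℤ)+2),
    ← Equiv.swap_apply_apply (phiEquiv n) (-((k:ℤ)+1)) (-((k:ℤ)+2)),
    phi_val_pos n ((k:ℤ)+1) (by omega), phi_val_pos n ((k:ℤ)+2) (by omega),
    phi_val_neg n (-((k:ℤ)+1)) (by omega) (by omega),
    phi_val_neg n (-((k:ℤ)+2)) (by omega) (by omega)]
  rw [show (k:ℤ)+1+n = (n:ℤ)+k+1 by ring, show (k:ℤ)+2+n = (n:ℤ)+k+1+1 by ring,
    show -((k:ℤ)+1)+n+1 = (n:ℤ)-k-2+1+1 by ring, show -((k:ℤ)+2)+n+1 = (n:ℤ)-k-2+1 by ring,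
    Equiv.swap_comm ((n:ℤ)-k-2+1+1)]

lemma conj_apply_pos (n : ℕ) {σ : Equiv.Perm ℤ} (hσ : σ ∈ WB n) (x : ℤ)
    (hx1 : 1 ≤ x) (hx2 : x ≤ (n:ℤ)) :
    (phiEquiv n * σ * (phiEquiv n)⁻¹) ((n:ℤ)+x) = phiEquiv n (σ x) := by
  have h : (phiEquiv n)⁻¹ ((n:ℤ)+x) = x := by
    rw [phi_inv_apply]; split_ifs <;> omega
  rw [Equiv.Perm.mul_apply, Equiv.Perm.mul_apply, h]

lemma conj_apply_neg (n : ℕ) {σ : Equiv.Perm ℤ} (hσ : σ ∈ WB n) (x : ℤ)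
    (hx1 : 1 ≤ x) (hx2 : x ≤ (n:ℤ)) :
    (phiEquiv n * σ * (phiEquiv n)⁻¹) ((n:ℤ)+1-x) = phiEquiv n (-(σ x)) := by
  have h : (phiEquiv n)⁻¹ ((n:ℤ)+1-x) = -x := by
    rw [phi_inv_apply]; split_ifs <;> omega
  rw [Equiv.Perm.mul_apply, Equiv.Perm.mul_apply, h, hσ.1 x]

lemma ellF_t0 (n : ℕ) (hn : 0 < n) (σ : Equiv.Perm ℤ) (hσ : σ ∈ WB n) :
    ellF n (σ * tB 0) + (if σ 1 < 0 then 1 else 0)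
      = ellF n σ + (if -(σ 1) < 0 then 1 else 0) := by
  have h1mem : (1:ℤ) ∈ Finset.Icc (1:ℤ) (n:ℤ) := by
    simp only [Finset.mem_Icc]; omega
  rw [ellF, ellF, ← Finset.add_sum_erase _ _ h1mem,
    ← Finset.add_sum_erase _ (fun j => if σ j < 0 then 1 else 0) h1mem]
  have hcong : ∀ j ∈ (Finset.Icc (1:ℤ) (n:ℤ)).erase 1,
      (if (σ * tB 0) j < 0 then (1:ℕ) else 0) = (if σ j < 0 then 1 else 0) := by
    intro j hj
    rw [Finset.mem_erase, Finset.mem_Icc] at hj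
    have ht : tB 0 j = j := by rw [tB0_apply]; split_ifs <;> omega
    rw [Equiv.Perm.mul_apply, ht]
  rw [Finset.sum_congr rfl hcong]
  have ht1 : tB 0 1 = -1 := by rw [tB0_apply]; norm_num
  have h1 : (σ * tB 0) 1 = -(σ 1) := by
    rw [Equiv.Perm.mul_apply, ht1, hσ.1 1]
  rw [h1]
  split_ifs <;> omega

lemma ellF_tk (n k : ℕ) (hk : (k:ℤ) + 2 ≤ n) (σ : Equiv.Perm ℤ) :
    ellF n (σ * tB (k+1)) = ellF n σ := by
  rw [ellF, ellF]
  refine Finset.sum_equiv (tB (k+1)) ?_ ?_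
  · intro x
    simp only [Finset.mem_Icc, tBk_apply]
    split_ifs <;> omega
  · intro x _
    rw [Equiv.Perm.mul_apply]

/-- Step at generator 0. -/
lemma Fstep0 (n : ℕ) (hn : 0 < n) (σ : Equiv.Perm ℤ) (hσ : σ ∈ WB n) :
    if σ 1 < 0 then Fp n (σ * tB 0) + 2 = Fp n σ else Fp n (σ * tB 0) = Fp n σ + 2 := by
  set w := phiEquiv n * σ * (phiEquiv n)⁻¹ with hw
  have hconj : phiEquiv n * (σ * tB 0) * (phiEquiv n)⁻¹ = w * Equiv.swap (n:ℤ) ((n:ℤ)+1) := by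
    rw [conj_mul, conj_t0 n hn, hw]
  have hσ1 : σ 1 ≠ 0 := wb_ne_zero hσ (by omega)
  have hwn : w ((n:ℤ)) = phiEquiv n (-(σ 1)) := by
    have h := conj_apply_neg n hσ 1 (by omega) (by exact_mod_cast hn)
    rw [show (n:ℤ)+1-1 = (n:ℤ) by ring] at h
    rw [hw]; exact h
  have hwn1 : w ((n:ℤ)+1) = phiEquiv n (σ 1) := by
    have h := conj_apply_pos n hσ 1 (by omega) (by exact_mod_cast hn)
    rw [hw]; exact h
  have E1 := invF_swap n w (n:ℤ) (by exact_mod_cast hn) (by omega)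
  have E2 := ellF_t0 n hn σ hσ
  have hc1 : (w ((n:ℤ)+1) < w (n:ℤ)) ↔ σ 1 < 0 := by
    rw [hwn, hwn1, phi_lt_phi n hσ1 (by omega : -(σ 1) ≠ 0)]
    omega
  have hc2 : (w (n:ℤ) < w ((n:ℤ)+1)) ↔ 0 < σ 1 := by
    rw [hwn, hwn1, phi_lt_phi n (by omega : -(σ 1) ≠ 0) hσ1]
    omega
  simp only [hc1, hc2] at E1
  rw [Fp, Fp, hconj, ← hw]
  split_ifs at E1 E2 ⊢ <;> omega

/-- Step at generator k+1. -/
lemma Fstepk (n k : ℕ) (hk : (k:ℤ) + 2 ≤ n) (σ : Equiv.Perm ℤ) (hσ : σ ∈ WB n) :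
    if σ ((k:ℤ)+2) < σ ((k:ℤ)+1) then Fp n (σ * tB (k+1)) + 2 = Fp n σ
      else Fp n (σ * tB (k+1)) = Fp n σ + 2 := by
  set w := phiEquiv n * σ * (phiEquiv n)⁻¹ with hw
  set a1 : ℤ := (n:ℤ)+k+1 with ha1
  set a2 : ℤ := (n:ℤ)-k-2+1 with ha2
  have hconj : phiEquiv n * (σ * tB (k+1)) * (phiEquiv n)⁻¹
      = w * Equiv.swap a1 (a1+1) * Equiv.swap a2 (a2+1) := by
    rw [ha1, ha2, hw, conj_mul, conj_tk n k hk]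
    group
  have hz1 : σ ((k:ℤ)+1) ≠ 0 := wb_ne_zero hσ (by omega)
  have hz2 : σ ((k:ℤ)+2) ≠ 0 := wb_ne_zero hσ (by omega)
  have hwa1 : w a1 = phiEquiv n (σ ((k:ℤ)+1)) := by
    have := conj_apply_pos n hσ ((k:ℤ)+1) (by omega) (by omega)
    rw [ha1, show (n:ℤ)+k+1 = (n:ℤ)+((k:ℤ)+1) by ring]
    exact this
  have hwa1' : w (a1+1) = phiEquiv n (σ ((k:ℤ)+2)) := by
    have := conj_apply_pos n hσ ((k:ℤ)+2) (by omega) (by omega)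
    rw [ha1, show (n:ℤ)+k+1+1 = (n:ℤ)+((k:ℤ)+2) by ring]
    exact this
  have hwa2 : w a2 = phiEquiv n (-(σ ((k:ℤ)+2))) := by
    have := conj_apply_neg n hσ ((k:ℤ)+2) (by omega) (by omega)
    rw [ha2, show (n:ℤ)-k-2+1 = (n:ℤ)+1-((k:ℤ)+2) by ring]
    exact this
  have hwa2' : w (a2+1) = phiEquiv n (-(σ ((k:ℤ)+1))) := by
    have := conj_apply_neg n hσ ((k:ℤ)+1) (by omega) (by omega)
    rw [ha2, show (n:ℤ)-k-2+1+1 = (n:ℤ)+1-((k:ℤ)+1) by ring]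
    exact this
  have E1 := invF_swap n w a1 (by omega) (by omega)
  set w1 := w * Equiv.swap a1 (a1+1) with hw1
  have hfix : ∀ x : ℤ, x = a2 ∨ x = a2 + 1 → w1 x = w x := by
    intro x hx
    rw [hw1, Equiv.Perm.mul_apply, Equiv.swap_apply_of_ne_of_ne (by omega) (by omega)]
  have E2 := invF_swap n w1 a2 (by omega) (by omega)
  rw [hfix a2 (Or.inl rfl), hfix (a2+1) (Or.inr rfl)] at E2
  have hc1 : (w (a1+1) < w a1) ↔ σ ((k:ℤ)+2) < σ ((k:ℤ)+1) := by
    rw [hwa1, hwa1', phi_lt_phi n hz2 hz1]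
  have hc1' : (w a1 < w (a1+1)) ↔ σ ((k:ℤ)+1) < σ ((k:ℤ)+2) := by
    rw [hwa1, hwa1', phi_lt_phi n hz1 hz2]
  have hc2 : (w (a2+1) < w a2) ↔ σ ((k:ℤ)+2) < σ ((k:ℤ)+1) := by
    rw [hwa2, hwa2', phi_lt_phi n (by omega : -(σ ((k:ℤ)+1)) ≠ 0) (by omega : -(σ ((k:ℤ)+2)) ≠ 0)]
    omega
  have hc2' : (w a2 < w (a2+1)) ↔ σ ((k:ℤ)+1) < σ ((k:ℤ)+2) := by
    rw [hwa2, hwa2', phi_lt_phi n (by omega : -(σ ((k:ℤ)+2)) ≠ 0) (by omega : -(σ ((k:ℤ)+1)) ≠ 0)]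
    omega
  simp only [hc1, hc1'] at E1
  simp only [hc2, hc2'] at E2
  have hneq : σ ((k:ℤ)+1) ≠ σ ((k:ℤ)+2) := by
    intro h; have := σ.injective h; omega
  have hell := ellF_tk n k hk σ
  rw [Fp, Fp, hconj, ← hw, hell]
  split_ifs at E1 E2 ⊢ <;> omega


lemma Fp_one (n : ℕ) : Fp n 1 = 0 := by
  have h1 : phiEquiv n * 1 * (phiEquiv n)⁻¹ = 1 := by group
  rw [Fp, h1, invF, ellF]
  have e1 : ∑ p ∈ Finset.Icc (1:ℤ) (2*n) ×ˢ Finset.Icc (1:ℤ) (2*n),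
      (if p.1 < p.2 ∧ (1 : Equiv.Perm ℤ) p.2 < (1 : Equiv.Perm ℤ) p.1 then (1:ℕ) else 0) = 0 := by
    refine Finset.sum_eq_zero ?_
    rintro ⟨x, y⟩ _
    simp only [Equiv.Perm.one_apply]
    exact if_neg (by omega)
  have e2 : ∑ j ∈ Finset.Icc (1:ℤ) (n:ℤ), (if (1 : Equiv.Perm ℤ) j < 0 then (1:ℕ) else 0) = 0 := by
    refine Finset.sum_eq_zero ?_
    intro j hj
    rw [Finset.mem_Icc] at hj
    simp only [Equiv.Perm.one_apply]
    exact if_neg (by omega)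
  rw [e1, e2]

lemma eq_one_of_no_descent (n : ℕ) (σ : Equiv.Perm ℤ) (hσ : σ ∈ WB n)
    (h0 : 0 < n → 0 < σ 1)
    (hk : ∀ j : ℤ, 1 ≤ j → j < (n:ℤ) → σ j < σ (j+1)) : σ = 1 := by
  have hup : ∀ j : ℤ, 1 ≤ j → (j ≤ (n:ℤ) → j ≤ σ j) := by
    refine fun j hj => Int.le_induction (motive := fun j _ => j ≤ (n:ℤ) → j ≤ σ j) ?_ ?_ j hj
    · intro h; have := h0 (by exact_mod_cast h); omega
    · intro j hj1 ih h
      have h1 := ih (by omega)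
      have h2 := hk j hj1 (by omega)
      omega
  have hdown : ∀ j : ℤ, j ≤ (n:ℤ) → (1 ≤ j → σ j ≤ j) := by
    refine fun j hj => Int.le_induction_down (motive := fun j _ => 1 ≤ j → σ j ≤ j) ?_ ?_ j hj
    · intro h
      have hb := wb_bound hσ (x := (n:ℤ)) (by rw [abs_of_nonneg (by omega)])
      rcases abs_cases (σ (n:ℤ)) with ⟨h1, _⟩ | ⟨h1, _⟩ <;> omega
    · intro j hj1 ih h
      have h1 := ih (by omega)
      have h2 := hk (j-1) (by omega) (by omega)
      rw [show j - 1 + 1 = j by ring] at h2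
      omega
  have hfix : ∀ j : ℤ, 1 ≤ j → j ≤ (n:ℤ) → σ j = j := by
    intro j h1 h2
    have := hup j h1 h2
    have := hdown j h2 h1
    omega
  ext x
  rw [Equiv.Perm.one_apply]
  rcases lt_trichotomy x 0 with hx | hx | hx
  · by_cases hb : -(n:ℤ) ≤ x
    · have h1 : σ (-(-x)) = -(σ (-x)) := hσ.1 (-x)
      rw [neg_neg] at h1
      rw [h1, hfix (-x) (by omega) (by omega)]
      ring
    · exact hσ.2 x (by rcases abs_cases x with ⟨h1,_⟩|⟨h1,_⟩ <;> omega)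
  · rw [hx]; exact wb_zero hσ
  · by_cases hb : x ≤ (n:ℤ)
    · exact hfix x (by omega) hb
    · exact hσ.2 x (by rcases abs_cases x with ⟨h1,_⟩|⟨h1,_⟩ <;> omega)

lemma exists_descent (n : ℕ) (σ : Equiv.Perm ℤ) (hσ : σ ∈ WB n) (hne : σ ≠ 1) :
    ∃ i : Fin n, Fp n (σ * tB (i : ℕ)) + 2 = Fp n σ := by
  by_cases hn : 0 < n
  · by_cases h1 : σ 1 < 0
    · refine ⟨⟨0, hn⟩, ?_⟩
      have := Fstep0 n hn σ hσ
      rw [if_pos h1] at this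
      exact this
    · by_cases h2 : ∃ k : ℕ, (k:ℤ)+2 ≤ (n:ℤ) ∧ σ ((k:ℤ)+2) < σ ((k:ℤ)+1)
      · obtain ⟨k, hk1, hk2⟩ := h2
        refine ⟨⟨k+1, by omega⟩, ?_⟩
        have := Fstepk n k hk1 σ hσ
        rw [if_pos hk2] at this
        exact this
      · exfalso
        apply hne
        apply eq_one_of_no_descent n σ hσ
        · intro _
          have := wb_ne_zero hσ (x := 1) (by omega)
          omega
        · intro j hj1 hj2
          push_neg at h2
          have hk := h2 (j-1).toNat
          rw [Int.toNat_of_nonneg (by omega)] at hk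
          rw [show j-1+2 = j+1 by ring, show j-1+1 = j by ring] at hk
          have hle := hk (by omega)
          have hne2 : σ j ≠ σ (j+1) := fun h => by have := σ.injective h; omega
          omega
  · exfalso
    apply hne
    apply eq_one_of_no_descent n σ hσ
    · omega
    · intro j hj1 hj2; omega

lemma Fstep_le (n : ℕ) (σ : Equiv.Perm ℤ) (hσ : σ ∈ WB n) (i : Fin n) :
    Fp n (σ * tB (i : ℕ)) ≤ Fp n σ + 2 := by
  obtain ⟨i, hi⟩ := i
  cases i with
  | zero =>
    show Fp n (σ * tB 0) ≤ Fp n σ + 2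
    have := Fstep0 n (by omega) σ hσ
    split_ifs at this <;> omega
  | succ k =>
    show Fp n (σ * tB (k+1)) ≤ Fp n σ + 2
    have := Fstepk n k (by omega) σ hσ
    split_ifs at this <;> omega

lemma word_prod_eq (n : ℕ) (word : List (Fin n)) :
    (word.map (fun i => tB i)).prod = ((word.map (fun i => tB i.val)).prod : Equiv.Perm ℤ) := by
  simp only [List.pure_def, List.bind_eq_flatMap]
  have h : List.flatMap (fun a : Fin n => ([(a : ℕ)] : List ℕ)) word = word.map Fin.val := by
    induction word with
    | nil => rfl
    | cons x xs ih => simp_all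
  rw [h, List.map_map]
  rfl

lemma Fp_le_len (n : ℕ) (word : List (Fin n)) :
    Fp n ((word.map (fun i => tB i.val)).prod) ≤ 2 * word.length := by
  induction word using List.reverseRecOn with
  | nil => simp [Fp_one]
  | append_singleton ws i ih =>
    rw [List.map_append, List.prod_append, List.map_cons, List.map_nil,
      List.prod_cons, List.prod_nil, mul_one, List.length_append]
    have hmem : (ws.map (fun i => tB i.val)).prod ∈ WB n := by
      refine list_prod_mem ?_
      intro x hx
      rw [List.mem_map] at hx
      obtain ⟨j, _, rfl⟩ := hx
      exact tB_mem n j j.2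
    have := Fstep_le n _ hmem i
    simp only [List.length_cons, List.length_nil]
    omega

lemma exists_word (n : ℕ) : ∀ m : ℕ, ∀ σ : Equiv.Perm ℤ, σ ∈ WB n → Fp n σ = m →
    ∃ word : List (Fin n), (word.map (fun i => tB i.val)).prod = σ ∧ 2 * word.length = m := by
  intro m
  induction m using Nat.strong_induction_on with
  | _ m ih =>
    intro σ hσ hm
    by_cases h1 : σ = 1
    · exact ⟨[], by simp [h1], by rw [← hm, h1, Fp_one]; rfl⟩
    · obtain ⟨i, hi⟩ := exists_descent n σ hσ h1
      have hmem : σ * tB (i : ℕ) ∈ WB n := mul_mem hσ (tB_mem n i i.2)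
      have hlt : Fp n (σ * tB (i : ℕ)) < m := by omega
      obtain ⟨w, hw1, hw2⟩ := ih _ hlt (σ * tB (i : ℕ)) hmem rfl
      refine ⟨w ++ [i], ?_, ?_⟩
      · rw [List.map_append, List.prod_append, List.map_cons, List.map_nil,
          List.prod_cons, List.prod_nil, mul_one, hw1, mul_assoc, tB_sq, mul_one]
      · rw [List.length_append, List.length_cons, List.length_nil]
        omega

lemma len_eq (n : ℕ) (σ : WB n) : Fp n (σ : Equiv.Perm ℤ) = 2 * lenB n σ := by
  obtain ⟨w0, hw0, hl0⟩ := exists_word n (Fp n (σ : Equiv.Perm ℤ)) (σ : Equiv.Perm ℤ) σ.2 rfl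
  have hw0' : (w0.map (fun i => tB i)).prod = (σ : Equiv.Perm ℤ) := by
    rw [word_prod_eq]; exact hw0
  rw [lenB]
  have hne : {l | ∃ word : List (Fin n), word.length = l ∧
      (word.map (fun i => tB i)).prod = (σ : Equiv.Perm ℤ)}.Nonempty :=
    ⟨w0.length, w0, rfl, hw0'⟩
  obtain ⟨w1, hw1len, hw1⟩ := Nat.sInf_mem hne
  have hub : sInf {l | ∃ word : List (Fin n), word.length = l ∧
      (word.map (fun i => tB i)).prod = (σ : Equiv.Perm ℤ)} ≤ w0.length :=
    Nat.sInf_le ⟨w0, rfl, hw0'⟩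
  have hw1' : (w1.map (fun i => tB i.val)).prod = (σ : Equiv.Perm ℤ) := by
    rw [← word_prod_eq]; exact hw1
  have hlb : Fp n (σ : Equiv.Perm ℤ) ≤ 2 * w1.length := by
    conv_lhs => rw [← hw1']
    exact Fp_le_len n w1
  omega


end Stmt9

/-- The map `Ψ_n : W_n → S_{2n}`, `Ψ_n(σ) = ψ ∘ σ ∘ ψ⁻¹` (with
`ψ : [±n] → [2n]` the order-preserving bijection), is an injective group homomorphism
into `S_{2n}` (it fixes all points outside `[2n]`), and for all `σ ∈ W_n` the Coxeter
length satisfies `ℓ(Ψ_n(σ)) = 2 ℓ(σ) − ℓ_0(σ)`, i.e.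
`ℓ(Ψ_n(σ)) + ℓ_0(σ) = 2 ℓ(σ)`, where the length in `S_{2n}` is the number of
inversions. -/
theorem stmt_9 (n : ℕ) :
    Function.Injective (PsiB n) ∧
    (∀ u v : WB n, PsiB n (u * v) = PsiB n u * PsiB n v) ∧
    (∀ (σ : WB n) (j : ℤ), j < 1 ∨ 2 * (n : ℤ) < j → PsiB n σ j = j) ∧
    (∀ σ : WB n, invS2n n (PsiB n σ) + ell0 n σ = 2 * lenB n σ) := by
  refine ⟨?_, ?_, ?_, ?_⟩
  · intro u v h
    rw [PsiB, PsiB] at h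
    exact Subtype.ext (mul_left_cancel (mul_right_cancel h))
  · intro u v
    rw [PsiB, PsiB, PsiB, Subgroup.coe_mul]
    group
  · intro σ j hj
    rw [PsiB, Equiv.Perm.mul_apply, Equiv.Perm.mul_apply, Stmt9.phi_inv_apply]
    by_cases hj0 : j = 0
    · rw [if_pos hj0, Stmt9.wb_zero σ.2, Stmt9.phi_apply, if_pos rfl, hj0]
    · rw [if_neg hj0, if_neg (by omega)]
      have habs : (n:ℤ) < |j - n| := by
        rcases abs_cases (j - (n:ℤ)) with ⟨h1,_⟩|⟨h1,_⟩ <;> omega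
      rw [σ.2.2 (j - n) habs, Stmt9.phi_apply, if_neg (by omega), if_neg (by omega)]
      ring
  · intro σ
    rw [Stmt9.invS2n_eq, Stmt9.ell0_eq, ← Stmt9.len_eq]
    rfl
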